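/- Let (Γ, ⪯) be a left-ordered group. If (f, g, u, v, w) is a crossing for (Γ, ⪯), then (f, g, u, v, g^n w) and (f, g, u, v, f^n w) are also crossings for every positive integer n. -/

import Mathlib

/-- A crossing for a left-ordered group `(Γ, ≤)`. -/
def IsCrossing {Γ : Type*} [Group Γ] [LinearOrder Γ] (f g u v w : Γ) : Prop :=
  u < w ∧ w < v ∧
  (∀ n : ℕ, 0 < n → g ^ n * u < v ∧ u < f ^ n * v) ∧
  ∃ M N : ℕ, 0 < M ∧ 0 < N ∧ f ^ N * v < w ∧ w < g ^ M * u

private lemma aux_lt {Γ : Type*} [Group Γ] [LinearOrder Γ]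
    [CovariantClass Γ Γ (· * ·) (· ≤ ·)] {h x : Γ} (hx : x < h * x) :
    ∀ k : ℕ, 0 < k → x < h ^ k * x := by
  intro k hk
  induction k with
  | zero => exact absurd hk (by simp)
  | succ k ih =>
    rcases Nat.eq_zero_or_pos k with hk0 | hk0
    · simpa [hk0]
    · have := ih hk0
      calc x < h * x := hx
        _ ≤ h * (h ^ k * x) := mul_le_mul_right this.le h
        _ = h ^ (k + 1) * x := by rw [pow_succ', mul_assoc]

private lemma aux_lt' {Γ : Type*} [Group Γ] [LinearOrder Γ]
    [CovariantClass Γ Γ (· * ·) (· ≤ ·)] {h x : Γ} (hx : h * x < x) :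
    ∀ k : ℕ, 0 < k → h ^ k * x < x := by
  intro k hk
  induction k with
  | zero => exact absurd hk (by simp)
  | succ k ih =>
    rcases Nat.eq_zero_or_pos k with hk0 | hk0
    · simpa [hk0]
    · have := ih hk0
      calc h ^ (k + 1) * x = h * (h ^ k * x) := by rw [pow_succ', mul_assoc]
        _ ≤ h * x := mul_le_mul_right this.le h
        _ < x := hx

private lemma aux_le {Γ : Type*} [Group Γ] [LinearOrder Γ]
    [CovariantClass Γ Γ (· * ·) (· ≤ ·)] {h x : Γ} (hx : h * x ≤ x) :
    ∀ k : ℕ, h ^ k * x ≤ x := by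
  intro k
  induction k with
  | zero => simp
  | succ k ih =>
    calc h ^ (k + 1) * x = h * (h ^ k * x) := by rw [pow_succ', mul_assoc]
      _ ≤ h * x := mul_le_mul_right ih h
      _ ≤ x := hx

private lemma aux_ge {Γ : Type*} [Group Γ] [LinearOrder Γ]
    [CovariantClass Γ Γ (· * ·) (· ≤ ·)] {h x : Γ} (hx : x ≤ h * x) :
    ∀ k : ℕ, x ≤ h ^ k * x := by
  intro k
  induction k with
  | zero => simp
  | succ k ih =>
    calc x ≤ h * x := hx
      _ ≤ h * (h ^ k * x) := mul_le_mul_right ih h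
      _ = h ^ (k + 1) * x := by rw [pow_succ', mul_assoc]

/-- If `(f, g, u, v, w)` is a crossing, then `(f, g, u, v, gⁿ w)` and
`(f, g, u, v, fⁿ w)` are also crossings for every positive integer `n`. -/
theorem crossing_translate_w {Γ : Type*} [Group Γ] [LinearOrder Γ]
    [CovariantClass Γ Γ (· * ·) (· ≤ ·)] (f g u v w : Γ)
    (h : IsCrossing f g u v w) :
    ∀ n : ℕ, 0 < n →
      IsCrossing f g u v (g ^ n * w) ∧ IsCrossing f g u v (f ^ n * w) := by
  obtain ⟨huw, hwv, hmid, M, N, hM, hN, hfNv, hwgMu⟩ := h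
  intro n hn
  have hgMw : w < g ^ M * w :=
    hwgMu.trans_le (mul_le_mul_right huw.le _)
  have hfNw : f ^ N * w < w :=
    lt_of_le_of_lt (mul_le_mul_right hwv.le _) hfNv
  -- w < g^n * w
  have hgnw : w < g ^ n * w := by
    by_contra hle
    push_neg at hle
    have h1 : (g ^ n) ^ M * w ≤ w := aux_le hle M
    have h2 : w < (g ^ M) ^ n * w := aux_lt hgMw n hn
    rw [← pow_mul] at h1 h2
    rw [Nat.mul_comm] at h2
    exact absurd (h2.trans_le h1) (lt_irrefl _)
  -- f^n * w < w
  have hfnw : f ^ n * w < w := by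
    by_contra hle
    push_neg at hle
    have h1 : w ≤ (f ^ n) ^ N * w := aux_ge hle N
    have h2 : (f ^ N) ^ n * w < w := aux_lt' hfNw n hn
    rw [← pow_mul] at h1 h2
    rw [Nat.mul_comm] at h2
    exact absurd (h1.trans_lt h2) (lt_irrefl _)
  constructor
  · refine ⟨huw.trans hgnw, ?_, hmid, n + M, N, by omega, hN, hfNv.trans hgnw, ?_⟩
    · have hstep : g ^ n * w < g ^ (n + M) * u := by
        rw [pow_add, mul_assoc]
        exact mul_lt_mul_right hwgMu _
      exact hstep.trans ((hmid (n + M) (by omega)).1)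
    · rw [pow_add, mul_assoc]
      exact mul_lt_mul_right hwgMu _
  · have hufnw : u < f ^ n * w := by
      have h1 : f ^ (n + N) * v < f ^ n * w := by
        rw [pow_add, mul_assoc]
        exact mul_lt_mul_right hfNv _
      exact ((hmid (n + N) (by omega)).2).trans h1
    refine ⟨hufnw, hfnw.trans hwv, hmid, M, n + N, hM, by omega, ?_, hfnw.trans hwgMu⟩
    rw [pow_add, mul_assoc]
    exact mul_lt_mul_right hfNv _
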